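/- Let G = (N, X, π) be a finite strategic game with the π-LIP. Then there exists a strong Nash equilibrium x ∈ X that is strictly Pareto efficient, i.e., there is no y ∈ X with π_i(y) ≤ π_i(x) for all i ∈ N and π_j(y) < π_j(x) for at least one j ∈ N. -/

import Mathlib

open Finset

/-- The vector `a` sorted in non-increasing order. -/
noncomputable def sortDesc {α : Type*} [LinearOrder α] {q : ℕ} (a : Fin q → α) : Fin q → α :=
  fun i => a (Tuple.sort a i.rev)

section aux

variable {α : Type*} [LinearOrder α] {q : ℕ}

lemma sortDesc_eq_comp (a : Fin q → α) :
    sortDesc a = a ∘ (Fin.revPerm.trans (Tuple.sort a)) := by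
  funext i; simp [sortDesc]

lemma sortDesc_antitone (a : Fin q → α) : Antitone (sortDesc a) := by
  intro i j hij
  exact Tuple.monotone_sort a (Fin.rev_le_rev.mpr hij)

lemma card_sortDesc (a : Fin q → α) (t : α) :
    Fintype.card {i // t ≤ sortDesc a i} = Fintype.card {i // t ≤ a i} := by
  classical
  refine Fintype.card_congr ((Fin.revPerm.trans (Tuple.sort a)).subtypeEquiv fun i => ?_)
  rw [sortDesc_eq_comp]; rfl

lemma sortDesc_mono {a b : Fin q → α} (h : ∀ i, a i ≤ b i) : ∀ j, sortDesc a j ≤ sortDesc b j := by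
  classical
  intro j
  have h1 : (j : Fin q) < Fintype.card {i // sortDesc a j ≤ sortDesc a i} :=
    by rw [Fintype.card_subtype]; exact (Tuple.lt_card_ge_iff_apply_ge_of_antitone (f := sortDesc a) (j := j) (sortDesc_antitone a)).mpr le_rfl
  have h2 : Fintype.card {i // sortDesc a j ≤ a i} ≤ Fintype.card {i // sortDesc a j ≤ b i} :=
    Fintype.card_subtype_mono _ _ (fun i hi => hi.trans (h i))
  have h3 : (j : Fin q) < Fintype.card {i // sortDesc a j ≤ sortDesc b i} := by
    rw [card_sortDesc]
    calc (j : ℕ) < Fintype.card {i // sortDesc a j ≤ sortDesc a i} := h1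
    _ = Fintype.card {i // sortDesc a j ≤ a i} := card_sortDesc a _
    _ ≤ _ := h2
  exact (Tuple.lt_card_ge_iff_apply_ge_of_antitone (f := sortDesc b) (j := j) (sortDesc_antitone b)).mp (by rwa [Fintype.card_subtype] at h3)

lemma sum_sortDesc (a : Fin q → ℝ) : ∑ i, sortDesc a i = ∑ i, a i := by
  rw [sortDesc_eq_comp]
  exact Equiv.sum_comp _ a

end aux

/-- `a` is strictly sorted-lexicographically smaller than `b`. -/
def SLexLt {α : Type*} [LinearOrder α] {q : ℕ} (a b : Fin q → α) : Prop :=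
  ∃ m : Fin q, (∀ i, i < m → sortDesc a i = sortDesc b i) ∧ sortDesc a m < sortDesc b m

/-- Sorted-lexicographic comparison of vectors indexed by an arbitrary finite type. -/
def SLexLtOn {α : Type*} [LinearOrder α] {ι : Type*} [Fintype ι] (a b : ι → α) : Prop :=
  SLexLt (a ∘ (Fintype.equivFin ι).symm) (b ∘ (Fintype.equivFin ι).symm)

/-- An improving move: some nonempty coalition `S` deviates (players outside `S`
keep their strategies) and every member of `S` strictly decreases her cost. -/
def ImprovingMove {ι : Type*} {X : ι → Type*} {β : Type*} [Preorder β]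
    (π : (∀ i, X i) → ι → β) (x y : ∀ i, X i) : Prop :=
  ∃ S : Finset ι, S.Nonempty ∧ (∀ i ∉ S, y i = x i) ∧ ∀ i ∈ S, π y i < π x i

/-- In a finite strategic game with the π-LIP there is a
strong Nash equilibrium that is strictly Pareto efficient. -/
theorem stmt_8 {ι : Type*} [Fintype ι] [Nonempty ι] {X : ι → Type*}
    [∀ i, Fintype (X i)] [∀ i, Nonempty (X i)]
    (π : (∀ i, X i) → ι → ℝ) (hπ : ∀ x i, 0 ≤ π x i)
    (hlip : ∀ x y, ImprovingMove π x y → SLexLtOn (π y) (π x)) :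
    ∃ x : ∀ i, X i, (∀ y, ¬ ImprovingMove π x y) ∧
      ¬ ∃ y : ∀ i, X i, (∀ i, π y i ≤ π x i) ∧ ∃ j, π y j < π x j := by
  classical
  letI : LinearOrder (Lex (Fin (Fintype.card ι) → ℝ)) :=
    @Pi.Lex.linearOrder _ _ _
      (inferInstance : WellFoundedLT (Fin (Fintype.card ι))) _
  set e := Fintype.equivFin ι with he
  let F : (∀ i, X i) → Lex (Fin (Fintype.card ι) → ℝ) :=
    fun x => toLex (sortDesc (π x ∘ e.symm))
  obtain ⟨x, hx⟩ := Finite.exists_min F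
  refine ⟨x, ?_, ?_⟩
  · intro y himp
    obtain ⟨m, h1, h2⟩ := hlip x y himp
    have hlt : F y < F x := ⟨m, fun j hj => h1 j hj, h2⟩
    exact absurd (hx y) (not_le.mpr hlt)
  · rintro ⟨y, hle, j, hj⟩
    have hsum : ∑ i, (π y ∘ e.symm) i < ∑ i, (π x ∘ e.symm) i := by
      simp only [Function.comp_apply]
      rw [Equiv.sum_comp e.symm (π y), Equiv.sum_comp e.symm (π x)]
      exact Finset.sum_lt_sum (fun i _ => hle i) ⟨j, Finset.mem_univ j, hj⟩
    have hne : sortDesc (π y ∘ e.symm) ≠ sortDesc (π x ∘ e.symm) := by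
      intro hcontra
      rw [← sum_sortDesc (π y ∘ e.symm), ← sum_sortDesc (π x ∘ e.symm), hcontra] at hsum
      exact lt_irrefl _ hsum
    have hle' : sortDesc (π y ∘ e.symm) ≤ sortDesc (π x ∘ e.symm) :=
      sortDesc_mono (fun i => hle _)
    have hlt : F y < F x :=
      @Pi.toLex_strictMono _ _ _ _ (inferInstance : WellFoundedLT (Fin (Fintype.card ι))) _ _
        (lt_of_le_of_ne hle' hne)
    exact absurd (hx y) (not_le.mpr hlt)
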